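/- For every positive integer n and integer t, ∑_{k=0}^{n} (-1)^{n-k}·(n/(n+k))·C(n+k, n-k)·L_{2k+t} equals L_t if n ≡ 0 (mod 5); equals L_{t-1}/2 if n ≡ 1 or 4 (mod 5); and equals -L_{t+1}/2 if n ≡ 2 or 3 (mod 5). -/

import Mathlib

open Finset Real

/-- Fibonacci numbers extended to integer indices. -/
def fibZ (n : ℤ) : ℤ :=
  if 0 ≤ n then (Nat.fib n.toNat : ℤ)
  else (-1) ^ ((-n).toNat + 1) * (Nat.fib (-n).toNat : ℤ)

/-- Lucas numbers on natural indices. -/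
def lucasNat : ℕ → ℤ
  | 0 => 2
  | 1 => 1
  | n + 2 => lucasNat (n + 1) + lucasNat n

/-- Lucas numbers extended to integer indices. -/
def lucasZ (n : ℤ) : ℤ :=
  if 0 ≤ n then lucasNat n.toNat
  else (-1) ^ (-n).toNat * lucasNat (-n).toNat

noncomputable def gold : ℝ := (1 + Real.sqrt 5) / 2
noncomputable def gold' : ℝ := (1 - Real.sqrt 5) / 2

noncomputable def cc (n k : ℕ) : ℝ :=
  if k ≤ n then (-1 : ℝ) ^ (n - k) * ((n : ℝ) / ((n : ℝ) + (k : ℝ))) * (Nat.choose (n + k) (n - k) : ℝ) else 0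

noncomputable def T (n : ℕ) (x : ℝ) : ℝ := ∑ k ∈ Finset.range (n+1), cc n k * x ^ k

noncomputable def w (r : ℝ) (m : ℕ) : ℝ :=
  if m = 0 then 1 else if m = 1 then (r-1)/2 else if m = 2 then -r/2
  else if m = 3 then -r/2 else (r-1)/2

lemma fact_step (a : ℕ) : ((a+1).factorial : ℝ) = (a+1) * (a.factorial : ℝ) := by
  rw [Nat.factorial_succ]; push_cast; ring

lemma cc_zero {n k : ℕ} (h : n < k) : cc n k = 0 := by rw [cc, if_neg (by omega)]

lemma cc_main (j m : ℕ) :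
    cc (j+1+m+2) (j+1) = cc (j+1+m+1) j - 2 * cc (j+1+m+1) (j+1) - cc (j+1+m) (j+1) := by
  rw [cc, cc, cc, cc, if_pos (by omega), if_pos (by omega), if_pos (by omega), if_pos (by omega)]
  rw [show j+1+m+2 - (j+1) = m+2 by omega, show j+1+m+1 - j = m+2 by omega,
      show j+1+m+1 - (j+1) = m+1 by omega, show j+1+m - (j+1) = m by omega,
      show j+1+m+2 + (j+1) = 2*j+m+4 by omega, show j+1+m+1 + j = 2*j+m+2 by omega,
      show j+1+m+1 + (j+1) = 2*j+m+3 by omega, show j+1+m + (j+1) = 2*j+m+2 by omega]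
  rw [Nat.cast_choose ℝ (show m+2 ≤ 2*j+m+4 by omega),
      Nat.cast_choose ℝ (show m+2 ≤ 2*j+m+2 by omega),
      Nat.cast_choose ℝ (show m+1 ≤ 2*j+m+3 by omega),
      Nat.cast_choose ℝ (show m ≤ 2*j+m+2 by omega)]
  rw [show 2*j+m+4 - (m+2) = 2*j+2 by omega, show 2*j+m+2 - (m+2) = 2*j by omega,
      show 2*j+m+3 - (m+1) = 2*j+2 by omega, show 2*j+m+2 - m = 2*j+2 by omega]
  rw [show 2*j+m+4 = (2*j+m+3)+1 by omega, fact_step,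
      show 2*j+m+3 = (2*j+m+2)+1 by omega, fact_step,
      show 2*j+m+2 = (2*j+m+1)+1 by omega, fact_step,
      show 2*j+m+1 = (2*j+m)+1 by omega, fact_step,
      show m+2 = (m+1)+1 by omega, fact_step (m+1),
      show m+1 = m+1 from rfl, fact_step m,
      show 2*j+2 = (2*j+1)+1 by omega, fact_step,
      show 2*j+1 = (2*j)+1 by omega, fact_step]
  have hP : ((2*j+m).factorial : ℝ) ≠ 0 := by positivity
  have hM : ((m).factorial : ℝ) ≠ 0 := by positivity
  have hJ : (((2*j)).factorial : ℝ) ≠ 0 := by positivity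
  have h1 : ((2:ℝ)*j+m+1) ≠ 0 := by positivity
  have h2 : ((2:ℝ)*j+m+2) ≠ 0 := by positivity
  have h3 : ((2:ℝ)*j+m+3) ≠ 0 := by positivity
  have h4 : ((2:ℝ)*j+m+4) ≠ 0 := by positivity
  push_cast
  have d1 : ((j:ℝ)+1+(m:ℝ)+2+((j:ℝ)+1)) ≠ 0 := by positivity
  have d2 : ((j:ℝ)+1+(m:ℝ)+1+(j:ℝ)) ≠ 0 := by positivity
  have d3 : ((j:ℝ)+1+(m:ℝ)+1+((j:ℝ)+1)) ≠ 0 := by positivity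
  have d4 : ((j:ℝ)+1+(m:ℝ)+((j:ℝ)+1)) ≠ 0 := by positivity
  have e1 : ((m:ℝ)+1) ≠ 0 := by positivity
  have e2 : ((m:ℝ)+1+1) ≠ 0 := by positivity
  have e3 : (2*(j:ℝ)+1) ≠ 0 := by positivity
  have e4 : (2*(j:ℝ)+1+1) ≠ 0 := by positivity
  field_simp
  ring

lemma cc_rec (n k : ℕ) (hn : 1 ≤ n) (hk : k ≤ n + 2) :
    cc (n+2) k = (if k = 0 then 0 else cc (n+1) (k-1)) - 2 * cc (n+1) k - cc n k := by
  rcases eq_or_ne k 0 with rfl | hk0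
  · rw [if_pos rfl]
    rw [cc, cc, cc, if_pos (by omega), if_pos (by omega), if_pos (by omega)]
    simp only [Nat.sub_zero, Nat.add_zero, Nat.cast_zero, add_zero, Nat.choose_self]
    have hn' : (0:ℝ) < (n:ℝ) := by exact_mod_cast hn
    have d1 : ((n:ℝ)+2) ≠ 0 := by positivity
    have d2 : ((n:ℝ)+1) ≠ 0 := by positivity
    have d3 : ((n:ℝ)) ≠ 0 := ne_of_gt hn'
    push_cast
    field_simp
    ring
  · rcases lt_or_ge k (n+1) with hkn | hkn
    · obtain ⟨j, rfl⟩ : ∃ j, k = j + 1 := ⟨k - 1, by omega⟩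
      obtain ⟨m, rfl⟩ : ∃ m, n = j + 1 + m := ⟨n - (j+1), by omega⟩
      rw [if_neg (by omega)]
      simpa using cc_main j m
    · rw [if_neg hk0]
      rcases eq_or_ne k (n+1) with rfl | hk1
      · rw [cc_zero (show n < n+1 by omega), show n+1-1 = n by omega,
            cc, cc, cc, if_pos (by omega), if_pos (by omega), if_pos (by omega)]
        rw [show n+2 - (n+1) = 1 by omega, show n+1 - n = 1 by omega,
            show n+1 - (n+1) = 0 by omega,
            show n+2 + (n+1) = 2*n+3 by omega, show n+1 + n = 2*n+1 by omega,
            show n+1 + (n+1) = 2*n+2 by omega]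
        rw [Nat.choose_one_right, Nat.choose_one_right, Nat.choose_zero_right]
        push_cast
        have d1 : ((n:ℝ)+2+((n:ℝ)+1)) ≠ 0 := by positivity
        have d2 : ((n:ℝ)+1+(n:ℝ)) ≠ 0 := by positivity
        have d3 : ((n:ℝ)+1+((n:ℝ)+1)) ≠ 0 := by positivity
        field_simp
        ring
      · have hk2 : k = n + 2 := by omega
        subst hk2
        rw [cc_zero (show n+1 < n+2 by omega), cc_zero (show n < n+2 by omega), cc, cc,
            if_pos (by omega), if_pos (by omega)]
        rw [show n+2 - (n+2) = 0 by omega, show n+2-1 = n+1 by omega,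
            show n+1 - (n+1) = 0 by omega,
            show n+2 + (n+2) = 2*(n+2) by omega, show n+1 + (n+1) = 2*(n+1) by omega]
        rw [Nat.choose_zero_right, Nat.choose_zero_right]
        push_cast
        have d1 : (2*((n:ℝ)+2)) ≠ 0 := by positivity
        have d2 : (2*((n:ℝ)+1)) ≠ 0 := by positivity
        field_simp
        ring

lemma T_ext (n N : ℕ) (h : n + 1 ≤ N) (x : ℝ) :
    T n x = ∑ k ∈ Finset.range N, cc n k * x ^ k := by
  rw [T]
  exact Finset.sum_subset (Finset.range_subset_range.mpr h)
    (fun k _ hk => by rw [cc_zero (by simp at hk ⊢; omega), zero_mul])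

lemma T_rec (n : ℕ) (hn : 1 ≤ n) (x : ℝ) :
    T (n+2) x = (x - 2) * T (n+1) x - T n x := by
  have hx : x * T (n+1) x
      = ∑ k ∈ Finset.range (n+3), (if k = 0 then (0:ℝ) else cc (n+1) (k-1)) * x ^ k := by
    conv_rhs => rw [Finset.sum_range_succ']
    simp only [Nat.add_sub_cancel, Nat.succ_ne_zero, if_false, if_true, reduceIte, zero_mul, add_zero]
    rw [T, Finset.mul_sum]
    apply Finset.sum_congr rfl
    intro k _
    ring
  have h1 : T (n+1) x = ∑ k ∈ Finset.range (n+3), cc (n+1) k * x ^ k := T_ext _ _ (by omega) x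
  have h0 : T n x = ∑ k ∈ Finset.range (n+3), cc n k * x ^ k := T_ext _ _ (by omega) x
  have : (x - 2) * T (n+1) x - T n x
      = ∑ k ∈ Finset.range (n+3),
          ((if k = 0 then (0:ℝ) else cc (n+1) (k-1)) - 2 * cc (n+1) k - cc n k) * x ^ k := by
    have expand : ∑ k ∈ Finset.range (n+3),
          ((if k = 0 then (0:ℝ) else cc (n+1) (k-1)) - 2 * cc (n+1) k - cc n k) * x ^ k
        = (∑ k ∈ Finset.range (n+3), (if k = 0 then (0:ℝ) else cc (n+1) (k-1)) * x ^ k)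
          - (∑ k ∈ Finset.range (n+3), 2 * (cc (n+1) k * x ^ k))
          - ∑ k ∈ Finset.range (n+3), cc n k * x ^ k := by
      rw [← Finset.sum_sub_distrib, ← Finset.sum_sub_distrib]
      apply Finset.sum_congr rfl
      intro k _
      ring
    rw [expand, ← hx, ← Finset.mul_sum, ← h1, ← h0]
    ring
  rw [this, show T (n+2) x = ∑ k ∈ Finset.range (n+3), cc (n+2) k * x ^ k from rfl]
  exact Finset.sum_congr rfl (fun k hk => by
    rw [cc_rec n k hn (by simp at hk; omega)])

lemma sqrt5_sq : Real.sqrt 5 ^ 2 = 5 := Real.sq_sqrt (by norm_num)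

lemma goldSq : gold ^ 2 = gold + 1 := by
  rw [gold]; linear_combination sqrt5_sq / 4

lemma gold'Sq : gold' ^ 2 = gold' + 1 := by
  rw [gold']; linear_combination sqrt5_sq / 4

lemma goldMul : gold * gold' = -1 := by
  rw [gold, gold']; linear_combination (-1/4 : ℝ) * sqrt5_sq

lemma goldNe : gold ≠ 0 := by
  intro h
  have := goldMul
  rw [h, zero_mul] at this
  norm_num at this

lemma gold'Ne : gold' ≠ 0 := by
  intro h
  have := goldMul
  rw [h, mul_zero] at this
  norm_num at this

lemma wrec (r : ℝ) (hr : r ^ 2 = r + 1) (m : ℕ) :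
    w r ((m+2) % 5) = (r ^ 2 - 2) * w r ((m+1) % 5) - w r (m % 5) := by
  have h : (m % 5 = 0 ∧ (m+1) % 5 = 1 ∧ (m+2) % 5 = 2) ∨
      (m % 5 = 1 ∧ (m+1) % 5 = 2 ∧ (m+2) % 5 = 3) ∨
      (m % 5 = 2 ∧ (m+1) % 5 = 3 ∧ (m+2) % 5 = 4) ∨
      (m % 5 = 3 ∧ (m+1) % 5 = 4 ∧ (m+2) % 5 = 0) ∨
      (m % 5 = 4 ∧ (m+1) % 5 = 0 ∧ (m+2) % 5 = 1) := by omega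
  rcases h with ⟨h1,h2,h3⟩|⟨h1,h2,h3⟩|⟨h1,h2,h3⟩|⟨h1,h2,h3⟩|⟨h1,h2,h3⟩ <;>
    rw [h1, h2, h3] <;> simp only [w] <;> norm_num
  · linear_combination (-r/2) * hr
  · linear_combination ((r+1)/2) * hr
  · linear_combination ((r+1)/2) * hr
  · linear_combination (-r/2) * hr
  · linear_combination -hr

lemma T_val (r : ℝ) (hr : r ^ 2 = r + 1) : ∀ n : ℕ,
    T (n+1) (r^2) = w r ((n+1) % 5) ∧ T (n+2) (r^2) = w r ((n+2) % 5) := by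
  intro n
  induction n with
  | zero =>
    constructor
    · norm_num [T, cc, Finset.sum_range_succ, w]
      linear_combination hr / 2
    · norm_num [T, cc, Finset.sum_range_succ, w]
      linear_combination ((r^2+r-2)/2) * hr
  | succ n ih =>
    refine ⟨ih.2, ?_⟩
    show T ((n+1)+2) (r^2) = w r (((n+1)+2) % 5)
    rw [T_rec (n+1) (by omega) (r^2)]
    rw [show (n+1)+1 = n+2 from rfl, ih.1, ih.2]
    rw [show (n+1)+2 = (n+1)+2 from rfl, wrec r hr (n+1), show (n+1)+1 = n+2 from rfl]

lemma lucasNat_real : ∀ n : ℕ, (lucasNat n : ℝ) = gold ^ n + gold' ^ n := by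
  have key : ∀ n : ℕ, (lucasNat n : ℝ) = gold ^ n + gold' ^ n ∧
      (lucasNat (n+1) : ℝ) = gold ^ (n+1) + gold' ^ (n+1) := by
    intro n
    induction n with
    | zero =>
      constructor
      · show ((2:ℤ) : ℝ) = _; norm_num
      · show ((1:ℤ) : ℝ) = _; rw [gold, gold']; push_cast; ring
    | succ n ih =>
      refine ⟨ih.2, ?_⟩
      show ((lucasNat (n+2) : ℤ) : ℝ) = _
      rw [lucasNat]
      push_cast
      rw [ih.1, ih.2]
      linear_combination (-(gold ^ n)) * goldSq + (-(gold' ^ n)) * gold'Sq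
  exact fun n => (key n).1

lemma gold_inv : gold⁻¹ = -gold' :=
  inv_eq_of_mul_eq_one_right (by linear_combination -goldMul)

lemma gold'_inv : gold'⁻¹ = -gold :=
  inv_eq_of_mul_eq_one_right (by linear_combination -goldMul)

lemma lucasZ_real (m : ℤ) : (lucasZ m : ℝ) = gold ^ m + gold' ^ m := by
  rcases le_or_gt 0 m with h | h
  · rw [lucasZ, if_pos h]
    obtain ⟨p, rfl⟩ : ∃ p : ℕ, m = (p : ℤ) := ⟨m.toNat, by omega⟩
    rw [Int.toNat_natCast, zpow_natCast, zpow_natCast, lucasNat_real]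
  · obtain ⟨p, rfl⟩ : ∃ p : ℕ, m = -(p : ℤ) := ⟨(-m).toNat, by omega⟩
    rw [lucasZ, if_neg (by omega), neg_neg, Int.toNat_natCast]
    rw [zpow_neg, zpow_neg, zpow_natCast, zpow_natCast, ← inv_pow, ← inv_pow,
        gold_inv, gold'_inv, neg_pow, neg_pow gold]
    push_cast
    rw [lucasNat_real]
    ring

theorem stmt13 (n : ℕ) (hn : 0 < n) (t : ℤ) :
    ∑ k ∈ Finset.range (n + 1),
        (-1 : ℝ) ^ (n - k) * ((n : ℝ) / ((n : ℝ) + (k : ℝ))) * (Nat.choose (n + k) (n - k) : ℝ) *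
          (lucasZ (2 * k + t) : ℝ) =
      if n % 5 = 0 then (lucasZ t : ℝ)
      else if n % 5 = 1 ∨ n % 5 = 4 then (lucasZ (t - 1) : ℝ) / 2
      else -(lucasZ (t + 1) : ℝ) / 2 := by
  have split : ∑ k ∈ Finset.range (n + 1),
        (-1 : ℝ) ^ (n - k) * ((n : ℝ) / ((n : ℝ) + (k : ℝ))) * (Nat.choose (n + k) (n - k) : ℝ) *
          (lucasZ (2 * k + t) : ℝ)
      = gold ^ t * T n (gold^2) + gold' ^ t * T n (gold'^2) := by
    rw [T, T, Finset.mul_sum, Finset.mul_sum, ← Finset.sum_add_distrib]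
    apply Finset.sum_congr rfl
    intro k hk
    have hk' : k ≤ n := by have := Finset.mem_range.mp hk; omega
    rw [cc, if_pos hk', lucasZ_real]
    rw [show (2 * (k:ℤ) + t) = ((2*k : ℕ) : ℤ) + t by push_cast; ring,
        zpow_add₀ goldNe, zpow_add₀ gold'Ne, zpow_natCast, zpow_natCast, pow_mul]
    ring
  rw [split]
  obtain ⟨m, rfl⟩ : ∃ m, n = m + 1 := ⟨n-1, by omega⟩
  rw [(T_val gold goldSq m).1, (T_val gold' gold'Sq m).1]
  have h5 : (m+1) % 5 = 0 ∨ (m+1) % 5 = 1 ∨ (m+1) % 5 = 2 ∨ (m+1) % 5 = 3 ∨ (m+1) % 5 = 4 := by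
    omega
  have hsub : gold - 1 = -gold' := by rw [gold, gold']; ring
  have hsub' : gold' - 1 = -gold := by rw [gold, gold']; ring
  rcases h5 with h | h | h | h | h <;> rw [h] <;> norm_num [w]
  · rw [lucasZ_real]
  · rw [lucasZ_real, zpow_sub_one₀ goldNe, zpow_sub_one₀ gold'Ne, gold_inv, gold'_inv,
        hsub, hsub']
    ring
  · rw [lucasZ_real, zpow_add_one₀ goldNe, zpow_add_one₀ gold'Ne]
    ring
  · rw [lucasZ_real, zpow_add_one₀ goldNe, zpow_add_one₀ gold'Ne]
    ring
  · rw [lucasZ_real, zpow_sub_one₀ goldNe, zpow_sub_one₀ gold'Ne, gold_inv, gold'_inv,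
        hsub, hsub']
    ring
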